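/- Unconstrained-minimization characterization of firm quasiuniform lower semicontinuity: let U ⊆ X. The family {f_t}_{t∈T} is firmly quasiuniformly lower semicontinuous on U if and only if sup over V ∈ EI(U) of limsup_{S↑T} [ inf over δ > 0 of the supremum, over all choices x_t ∈ dom f_t ∩ V (t ∈ S) with diam{x_t}_{t∈S} < δ, of inf over x ∈ X of max( max_{t∈S} d(x, x_t), (Σ̄_{t∈T} f_t)(x) − Σ_{t∈S} f_t(x_t) ) ] = 0, i.e., the defining condition holds with the inner infimum taken over all of X instead of over U. -/
import Mathlib


open scoped BigOperators
open Filter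

noncomputable section

/-- Upper limit of a net indexed by the finite subsets of `T` directed by inclusion:
`limsup_{S↑T} α_S := inf over S₀ of sup over finite S ⊇ S₀ of α_S`. -/
def limsupF {T : Type*} (α : Finset T → EReal) : EReal :=
  ⨅ S₀ : Finset T, ⨆ (S : Finset T) (_ : S₀ ⊆ S), α S

/-- Lower limit of a net indexed by the finite subsets of `T` directed by inclusion. -/
def liminfF {T : Type*} (α : Finset T → EReal) : EReal :=
  ⨆ S₀ : Finset T, ⨅ (S : Finset T) (_ : S₀ ⊆ S), α S

/-- The upper sum `(Σ̄_{t∈T} f_t)(x) := limsup_{S↑T} Σ_{t∈S} f_t(x)`. -/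
def upperSum {T X : Type*} (f : T → X → EReal) (x : X) : EReal :=
  limsupF (fun S => ∑ t ∈ S, f t x)

/-- `Λ_U({f_t}_{t∈S})` for a finite `S`: the supremum over `δ > 0` of the infimum of
`Σ_{t∈S} f_t(x_t)` over all choices `x_t ∈ U` with `diam{x_t}_{t∈S} < δ`. -/
def LambdaFin {T X : Type*} [MetricSpace X] (U : Set X) (f : T → X → EReal)
    (S : Finset T) : EReal :=
  ⨆ (δ : ℝ) (_ : 0 < δ),
    ⨅ (x : T → X) (_ : ∀ t ∈ S, x t ∈ U)
      (_ : ∀ t ∈ S, ∀ t' ∈ S, dist (x t) (x t') < δ),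
      ∑ t ∈ S, f t (x t)

/-- The uniform infimum `Λ_U({f_t}_{t∈T}) := liminf_{S↑T} Λ_U({f_t}_{t∈S})`. -/
def Lambda {T X : Type*} [MetricSpace X] (U : Set X) (f : T → X → EReal) : EReal :=
  liminfF (fun S => LambdaFin U f S)

/-- The Θ-quantity for a finite `S`, with points `x_t ∈ dom f_t ∩ V` and the inner
infimum over `x ∈ U`. -/
def ThetaFin2 {T X : Type*} [MetricSpace X] (V U : Set X) (f : T → X → EReal)
    (S : Finset T) : EReal :=
  ⨅ (δ : ℝ) (_ : 0 < δ),
    ⨆ (x : T → X) (_ : ∀ t ∈ S, x t ∈ V ∧ f t (x t) ≠ ⊤)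
      (_ : ∀ t ∈ S, ∀ t' ∈ S, dist (x t) (x t') < δ),
      ⨅ (y : X) (_ : y ∈ U),
        max (⨆ t ∈ S, (dist y (x t) : EReal))
          (upperSum f y - ∑ t ∈ S, f t (x t))

/-- `Θ_U({f_t}_{t∈T})`. -/
def Theta {T X : Type*} [MetricSpace X] (U : Set X) (f : T → X → EReal) : EReal :=
  limsupF (fun S => ThetaFin2 U U f S)

/-- The family of essentially interior subsets of `U`. -/
def EI {X : Type*} [MetricSpace X] (U : Set X) : Set (Set X) :=
  {V | V ⊆ U ∧ ∃ ρ > 0, (⋃ x ∈ V, Metric.ball x ρ) ⊆ U}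

/-- The quasiuniform infimum `Λ†_U({f_t}_{t∈T}) := inf over V ∈ EI(U) of Λ_V({f_t}_{t∈T})`. -/
def LambdaDag {T X : Type*} [MetricSpace X] (U : Set X) (f : T → X → EReal) : EReal :=
  ⨅ V ∈ EI U, Lambda V f

/-- `Θ†_U({f_t}_{t∈T})`. -/
def ThetaDag {T X : Type*} [MetricSpace X] (U : Set X) (f : T → X → EReal) : EReal :=
  ⨆ V ∈ EI U, limsupF (fun S => ThetaFin2 V U f S)

private lemma min_iSup_le' {α : Type*} [CompleteLinearOrder α] {ι : Sort*} {ρ : α}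
    {A B : ι → α} (h : ∀ i, min ρ (A i) ≤ B i) : min ρ (⨆ i, A i) ≤ ⨆ i, B i := by
  rcases le_or_gt (⨆ i, A i) ρ with hle | hlt
  · rw [min_eq_right hle]
    refine iSup_mono fun i => ?_
    have hi := h i
    rwa [min_eq_right ((le_iSup A i).trans hle)] at hi
  · rw [min_eq_left hlt.le]
    obtain ⟨i, hi⟩ := lt_iSup_iff.mp hlt
    refine le_iSup_of_le i ?_
    have hh := h i
    rwa [min_eq_left hi.le] at hh

private lemma limsupF_mono {T : Type*} {a b : Finset T → EReal} (h : ∀ S, a S ≤ b S) :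
    limsupF a ≤ limsupF b :=
  iInf_mono fun S₀ => iSup_mono fun S => iSup_mono fun _ => h S

/-- Monotonicity: the univ-version of `ThetaFin2` is below the `U`-version. -/
private lemma thetaFin2_univ_le {T X : Type*} [MetricSpace X] (f : T → X → EReal)
    (U V : Set X) (S : Finset T) :
    ThetaFin2 V (Set.univ : Set X) f S ≤ ThetaFin2 V U f S := by
  unfold ThetaFin2
  refine iInf_mono fun δ => iInf_mono fun hδ => iSup_mono fun x => iSup_mono fun hx =>
    iSup_mono fun hd => ?_
  exact le_iInf fun y => le_iInf fun hy => iInf₂_le y (Set.mem_univ y)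

/-- Key estimate: with an essential-interiority radius `ρ`, for a finite set containing
a fixed index, `min ρ (ThetaFin2 V U f S) ≤ ThetaFin2 V univ f S`. -/
private lemma step_thetaFin2 {T X : Type*} [MetricSpace X] (f : T → X → EReal)
    (U V : Set X) {ρ : ℝ} (hρ0 : 0 < ρ) (hρ : (⋃ x ∈ V, Metric.ball x ρ) ⊆ U)
    {t₀ : T} {S : Finset T} (ht₀ : t₀ ∈ S) :
    min (ρ : EReal) (ThetaFin2 V U f S) ≤ ThetaFin2 V (Set.univ : Set X) f S := by
  refine le_iInf fun δ => le_iInf fun hδ => ?_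
  have h1 : ThetaFin2 V U f S ≤
      ⨆ (x : T → X) (_ : ∀ t ∈ S, x t ∈ V ∧ f t (x t) ≠ ⊤)
        (_ : ∀ t ∈ S, ∀ t' ∈ S, dist (x t) (x t') < δ),
        ⨅ (y : X) (_ : y ∈ U),
          max (⨆ t ∈ S, (dist y (x t) : EReal))
            (upperSum f y - ∑ t ∈ S, f t (x t)) := iInf₂_le δ hδ
  refine le_trans (min_le_min_left _ h1) ?_
  refine min_iSup_le' fun x => min_iSup_le' fun hx => min_iSup_le' fun hd => ?_
  refine le_iInf fun y => le_iInf fun _ => ?_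
  by_cases hy : y ∈ U
  · exact (min_le_right _ _).trans (iInf₂_le y hy)
  · refine (min_le_left _ _).trans (le_trans ?_ (le_max_left _ _))
    have hxV : x t₀ ∈ V := (hx t₀ ht₀).1
    have hdist : ρ ≤ dist y (x t₀) := by
      by_contra hlt
      push_neg at hlt
      exact hy (hρ (Set.mem_biUnion hxV (Metric.mem_ball.mpr hlt)))
    calc ((ρ : ℝ) : EReal) ≤ ((dist y (x t₀) : ℝ) : EReal) := by exact_mod_cast hdist
      _ ≤ ⨆ t ∈ S, (dist y (x t) : EReal) := le_iSup₂ (f := fun t (_ : t ∈ S) =>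
            ((dist y (x t) : ℝ) : EReal)) t₀ ht₀

/-- Key estimate lifted through the upper limit over finite subsets. -/
private lemma key_limsup {T X : Type*} [MetricSpace X] (f : T → X → EReal)
    (U V : Set X) {ρ : ℝ} (hρ0 : 0 < ρ) (hρ : (⋃ x ∈ V, Metric.ball x ρ) ⊆ U) (t₀ : T) :
    min (ρ : EReal) (limsupF fun S => ThetaFin2 V U f S) ≤
      limsupF fun S => ThetaFin2 V (Set.univ : Set X) f S := by
  classical
  refine le_iInf fun S₀ => ?_
  have h1 : limsupF (fun S => ThetaFin2 V U f S) ≤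
      ⨆ (S : Finset T) (_ : insert t₀ S₀ ⊆ S), ThetaFin2 V U f S :=
    iInf_le _ (insert t₀ S₀)
  refine le_trans (min_le_min_left _ h1) ?_
  have h2 : min (ρ : EReal) (⨆ (S : Finset T) (_ : insert t₀ S₀ ⊆ S), ThetaFin2 V U f S) ≤
      ⨆ (S : Finset T) (_ : insert t₀ S₀ ⊆ S), ThetaFin2 V (Set.univ : Set X) f S := by
    refine min_iSup_le' fun S => min_iSup_le' fun hS => ?_
    exact step_thetaFin2 f U V hρ0 hρ (hS (Finset.mem_insert_self t₀ S₀))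
  refine h2.trans ?_
  exact iSup_mono fun S => iSup_le fun hS =>
    le_iSup (fun _ : S₀ ⊆ S => ThetaFin2 V (Set.univ : Set X) f S)
      ((Finset.subset_insert t₀ S₀).trans hS)

/-- Unconstrained-minimization characterization of firm quasiuniform lower
semicontinuity: `Θ†_U({f_t}) = 0` iff the corresponding quantity with the inner
infimum taken over all of `X` instead of `U` vanishes. -/
theorem firm_quasiuniform_lsc_iff_unconstrained
    {X : Type*} [MetricSpace X] {T : Type*} [Nonempty T]
    (f : T → X → EReal) (U : Set X)
    (hbot : ∀ t x, f t x ≠ ⊥)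
    (hdom : ∃ x : X, upperSum f x ≠ ⊤)
    (hbdd : ∀ S : Finset T, (⨅ x : X, ∑ t ∈ S, f t x) ≠ ⊥)
 :
    ThetaDag U f = 0 ↔
      (⨆ V ∈ EI U, limsupF (fun S => ThetaFin2 V (Set.univ : Set X) f S)) = 0 := by
  obtain ⟨t₀⟩ := ‹Nonempty T›
  set D : EReal := ThetaDag U f with hD
  set R : EReal := ⨆ V ∈ EI U, limsupF (fun S => ThetaFin2 V (Set.univ : Set X) f S) with hR
  have hRD : R ≤ D := by
    rw [hR, hD, ThetaDag]
    refine iSup_mono fun V => iSup_mono fun _ => limsupF_mono fun S => ?_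
    exact thetaFin2_univ_le f U V S
  -- key bound for every `V ∈ EI U`
  have hkey : ∀ V ∈ EI U, ∃ ρ : ℝ, 0 < ρ ∧
      min (ρ : EReal) (limsupF fun S => ThetaFin2 V U f S) ≤
        limsupF fun S => ThetaFin2 V (Set.univ : Set X) f S := by
    rintro V ⟨-, ρ, hρ0, hρ⟩
    exact ⟨ρ, hρ0, key_limsup f U V hρ0 hρ t₀⟩
  constructor
  · intro h0
    refine le_antisymm (hRD.trans_eq h0) ?_
    by_contra hlt
    push_neg at hlt
    have hDle : D ≤ R := by
      rw [hD, ThetaDag]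
      refine iSup₂_le fun V hV => ?_
      obtain ⟨ρ, hρ0, hk⟩ := hkey V hV
      have huniv_le : limsupF (fun S => ThetaFin2 V (Set.univ : Set X) f S) ≤ R :=
        le_iSup₂ (f := fun V (_ : V ∈ EI U) =>
          limsupF (fun S => ThetaFin2 V (Set.univ : Set X) f S)) V hV
      have hmin : min (ρ : EReal) (limsupF fun S => ThetaFin2 V U f S) ≤ R :=
        hk.trans huniv_le
      rcases min_le_iff.mp hmin with hc | hc
      · exact absurd (hc.trans_lt hlt)
          (not_lt.mpr (le_of_lt (by exact_mod_cast hρ0 : (0 : EReal) < (ρ : EReal))))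
      · exact hc
    exact absurd (h0 ▸ hDle) (not_le.mpr hlt)
  · intro h0
    refine le_antisymm ?_ (h0 ▸ hRD)
    rw [hD, ThetaDag]
    refine iSup₂_le fun V hV => ?_
    obtain ⟨ρ, hρ0, hk⟩ := hkey V hV
    have huniv_le : limsupF (fun S => ThetaFin2 V (Set.univ : Set X) f S) ≤ 0 := by
      refine le_trans ?_ h0.le
      exact le_iSup₂ (f := fun V (_ : V ∈ EI U) =>
        limsupF (fun S => ThetaFin2 V (Set.univ : Set X) f S)) V hV
    have hmin : min (ρ : EReal) (limsupF fun S => ThetaFin2 V U f S) ≤ 0 :=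
      hk.trans huniv_le
    rcases min_le_iff.mp hmin with hc | hc
    · exact absurd hc (not_le.mpr (by exact_mod_cast hρ0))
    · exact hc

end
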